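/- Extension of Ramanujan's first transformation, one extra parameter pair. Let n be a complex number and f a complex number that is not a nonpositive integer, with n² ≠ f/2, and set η = (n² − 1/4) f / (n² − f/2). Then for every complex x with |x| < 1, (1 − x²)^{−1/2} · Σ_{k=0}^{∞} (−n)_k (n)_k (f+1)_k x^{2k} / ( (3/2)_k (f)_k k! ) = Σ_{k=0}^{∞} (1/2 − n)_k (1/2 + n)_k x^{2k} (1 + k/η) / ( (3/2)_k k! ), where (1 − x²)^{−1/2} denotes the principal branch and η ≠ 0 is assumed. -/

import Mathlib

open Finset

noncomputable def poch (a : ℂ) (k : ℕ) : ℂ := ∏ i ∈ Finset.range k, (a + i)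

lemma poch_zero (a : ℂ) : poch a 0 = 1 := by simp [poch]

lemma poch_succ (a : ℂ) (k : ℕ) : poch a (k+1) = poch a k * (a + k) :=
  Finset.prod_range_succ _ _

lemma poch_ne_zero {a : ℂ} (h : ∀ m : ℕ, a + m ≠ 0) (k : ℕ) : poch a k ≠ 0 :=
  Finset.prod_ne_zero_iff.mpr fun i _ => h i

lemma fact_ne (k : ℕ) : ((Nat.factorial k : ℕ) : ℂ) ≠ 0 :=
  Nat.cast_ne_zero.mpr (Nat.factorial_ne_zero k)

lemma h32 (m : ℕ) : ((3:ℂ)/2 + m) ≠ 0 := by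
  have h1 : (0:ℝ) < 3/2 + m := by positivity
  have h2 : ((3:ℂ)/2 + m) = (((3/2 + m : ℝ)) : ℂ) := by push_cast; ring
  rw [h2]
  exact_mod_cast Complex.ofReal_ne_zero.mpr (ne_of_gt h1)

lemma hnat1 (m : ℕ) : ((m:ℂ) + 1) ≠ 0 := by
  have h1 : (0:ℝ) < m + 1 := by positivity
  have h2 : ((m:ℂ) + 1) = (((m + 1 : ℝ)) : ℂ) := by push_cast; ring
  rw [h2]
  exact_mod_cast Complex.ofReal_ne_zero.mpr (ne_of_gt h1)

lemma hnat32 (m : ℕ) : ((m:ℂ) + 3/2) ≠ 0 := by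
  have := h32 m; intro h; exact this (by linear_combination h)

lemma poch32_ne (k : ℕ) : poch (3/2) k ≠ 0 :=
  poch_ne_zero (fun m => h32 m) k

lemma div_transfer {x N D y N' D' : ℂ} (hD : D ≠ 0) (hD' : D' ≠ 0)
    (h : x * N * D' = y * N' * D) : x * (N / D) = y * (N' / D') := by
  field_simp
  linear_combination h

noncomputable def aa (n : ℂ) (i : ℕ) : ℂ :=
  poch (-n) i * poch n i / (poch (3/2) i * (Nat.factorial i : ℂ))

noncomputable def bb (j : ℕ) : ℂ := poch (1/2) j / (Nat.factorial j : ℂ)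

noncomputable def ee (n : ℂ) (k : ℕ) : ℂ :=
  poch (1/2 - n) k * poch (1/2 + n) k / (poch (3/2) k * (Nat.factorial k : ℂ))

noncomputable def cc (n f : ℂ) (i : ℕ) : ℂ :=
  poch (-n) i * poch n i * poch (f + 1) i / (poch (3/2) i * poch f i * (Nat.factorial i : ℂ))

lemma bb_zero : bb 0 = 1 := by simp [bb, poch_zero]

lemma aa_zero (n : ℂ) : aa n 0 = 1 := by simp [aa, poch_zero]

lemma ee_zero (n : ℂ) : ee n 0 = 1 := by simp [ee, poch_zero]

lemma bb_succ (j : ℕ) : ((j:ℂ) + 1) * bb (j+1) = ((j:ℂ) + 1/2) * bb j := by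
  unfold bb
  rw [poch_succ, Nat.factorial_succ]
  push_cast
  field_simp [fact_ne j, hnat1 j]
  ring

lemma aa_succ (n : ℂ) (i : ℕ) :
    (((3:ℂ)/2 + i) * ((i:ℂ) + 1)) * aa n (i+1) = ((i:ℂ)^2 - n^2) * aa n i := by
  unfold aa
  exact div_transfer (mul_ne_zero (poch32_ne _) (fact_ne _))
    (mul_ne_zero (poch32_ne _) (fact_ne _))
    (by rw [poch_succ, poch_succ, poch_succ, Nat.factorial_succ]; push_cast; ring)

lemma ee_succ (n : ℂ) (k : ℕ) :
    (((3:ℂ)/2 + k) * ((k:ℂ) + 1)) * ee n (k+1) = ((1/2 - n + k) * (1/2 + n + k)) * ee n k := by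
  unfold ee
  exact div_transfer (mul_ne_zero (poch32_ne _) (fact_ne _))
    (mul_ne_zero (poch32_ne _) (fact_ne _))
    (by rw [poch_succ, poch_succ, poch_succ, Nat.factorial_succ]; push_cast; ring)

noncomputable def AA (n : ℂ) (k : ℕ) : ℂ := ∑ i ∈ range (k+1), aa n i * bb (k - i)
noncomputable def BB (n : ℂ) (k : ℕ) : ℂ := ∑ i ∈ range (k+1), (i:ℂ) * (aa n i * bb (k - i))

lemma L1 (w : ℕ → ℂ) (n : ℂ) (k : ℕ) :
    ∑ i ∈ range (k+2), w i * (((k:ℂ) + 1 - i) * (aa n i * bb (k+1-i)))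
      = ∑ i ∈ range (k+1), w i * (((k:ℂ) + 1/2 - i) * (aa n i * bb (k-i))) := by
  rw [Finset.sum_range_succ]
  have hlast : ((k:ℂ) + 1 - ((k+1 : ℕ) : ℂ)) = 0 := by push_cast; ring
  rw [hlast]
  simp only [zero_mul, mul_zero, add_zero]
  refine Finset.sum_congr rfl fun i hi => ?_
  have hik : i ≤ k := by simpa [Nat.lt_succ_iff] using hi
  have hsub : k + 1 - i = (k - i) + 1 := by omega
  have hcast : ((k - i : ℕ) : ℂ) = (k:ℂ) - i := by
    push_cast [Nat.cast_sub hik]; ring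
  have hb := bb_succ (k - i)
  rw [hcast] at hb
  rw [hsub]
  linear_combination w i * aa n i * hb

lemma L2 (n : ℂ) (k : ℕ) :
    ∑ i ∈ range (k+2), ((i:ℂ) * ((i:ℂ) + 1/2)) * (aa n i * bb (k+1-i))
      = ∑ i ∈ range (k+1), ((i:ℂ)^2 - n^2) * (aa n i * bb (k-i)) := by
  rw [Finset.sum_range_succ']
  simp only [Nat.cast_zero, zero_mul, mul_zero, add_zero, zero_add]
  refine Finset.sum_congr rfl fun i hi => ?_
  have hsub : k + 1 - (i + 1) = k - i := by omega
  rw [hsub]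
  have haa := aa_succ n i
  push_cast
  linear_combination bb (k - i) * haa

lemma E1 (n : ℂ) (k : ℕ) :
    ((k:ℂ) + 3/2) * BB n (k+1) = ((k:ℂ) + 1/2) * BB n k - n^2 * AA n k := by
  have l1 := L1 (fun i => (i:ℂ)) n k
  have l2 := L2 n k
  unfold AA BB
  rw [mul_sum]
  calc ∑ i ∈ range (k+1+1), ((k:ℂ) + 3/2) * ((i:ℂ) * (aa n i * bb (k+1-i)))
      = ∑ i ∈ range (k+2), ((i:ℂ) * (((k:ℂ) + 1 - i) * (aa n i * bb (k+1-i)))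
          + ((i:ℂ) * ((i:ℂ) + 1/2)) * (aa n i * bb (k+1-i))) :=
        Finset.sum_congr rfl fun i _ => by ring
    _ = ∑ i ∈ range (k+2), (i:ℂ) * (((k:ℂ) + 1 - i) * (aa n i * bb (k+1-i)))
          + ∑ i ∈ range (k+2), ((i:ℂ) * ((i:ℂ) + 1/2)) * (aa n i * bb (k+1-i)) :=
        Finset.sum_add_distrib
    _ = ∑ i ∈ range (k+1), (i:ℂ) * (((k:ℂ) + 1/2 - i) * (aa n i * bb (k-i)))
          + ∑ i ∈ range (k+1), ((i:ℂ)^2 - n^2) * (aa n i * bb (k-i)) := by rw [l1, l2]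
    _ = ((k:ℂ) + 1/2) * ∑ i ∈ range (k+1), (i:ℂ) * (aa n i * bb (k-i))
          - n^2 * ∑ i ∈ range (k+1), aa n i * bb (k-i) := by
        rw [mul_sum, mul_sum, ← Finset.sum_add_distrib, ← Finset.sum_sub_distrib]
        exact Finset.sum_congr rfl fun i _ => by ring

lemma E2 (n : ℂ) (k : ℕ) :
    ((k:ℂ) + 1) * AA n (k+1) - BB n (k+1) = ((k:ℂ) + 1/2) * AA n k - BB n k := by
  have l1 := L1 (fun _ => (1:ℂ)) n k
  simp only [one_mul] at l1
  unfold AA BB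
  rw [mul_sum, ← Finset.sum_sub_distrib, mul_sum, ← Finset.sum_sub_distrib]
  calc ∑ i ∈ range (k+1+1), (((k:ℂ)+1) * (aa n i * bb (k+1-i)) - (i:ℂ) * (aa n i * bb (k+1-i)))
      = ∑ i ∈ range (k+2), ((k:ℂ) + 1 - i) * (aa n i * bb (k+1-i)) :=
        Finset.sum_congr rfl fun i _ => by ring
    _ = ∑ i ∈ range (k+1), ((k:ℂ) + 1/2 - i) * (aa n i * bb (k-i)) := l1
    _ = ∑ i ∈ range (k+1), (((k:ℂ)+1/2) * (aa n i * bb (k-i)) - (i:ℂ) * (aa n i * bb (k-i))) :=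
        Finset.sum_congr rfl fun i _ => by ring

lemma closed_forms (n : ℂ) (k : ℕ) :
    (4*n^2 - 1) * AA n k = ee n k * (4*n^2 - 1 - 2*k)
      ∧ (4*n^2 - 1) * BB n k = ee n k * (4*(k:ℂ)*n^2) := by
  induction k with
  | zero =>
    constructor
    · show (4*n^2 - 1) * (∑ i ∈ range 1, aa n i * bb (0 - i)) = _
      rw [Finset.sum_range_one, aa_zero, bb_zero, ee_zero]
      push_cast
      ring
    · show (4*n^2 - 1) * (∑ i ∈ range 1, (i:ℂ) * (aa n i * bb (0 - i))) = _
      rw [Finset.sum_range_one]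
      push_cast
      ring
  | succ k ih =>
    obtain ⟨hA, hB⟩ := ih
    have e1 := E1 n k
    have e2 := E2 n k
    have h32k := hnat32 k
    have h1k := hnat1 k
    have hee := ee_succ n k
    have hBnew : (4*n^2 - 1) * BB n (k+1) = ee n (k+1) * (4*((k:ℂ)+1)*n^2) := by
      apply mul_left_cancel₀ (mul_ne_zero h32k h1k)
      have h32' : ((k:ℂ) + 3/2) * (((k:ℂ)+1) * ((4*n^2 - 1) * BB n (k+1)))
          = ((k:ℂ)+1) * (4*n^2 - 1) * (((k:ℂ) + 3/2) * BB n (k+1)) := by ring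
      linear_combination ((k:ℂ)+1) * (4*n^2 - 1) * e1 + ((k:ℂ)+1)*((k:ℂ)+1/2)*hB
        - ((k:ℂ)+1)*n^2*hA - 4*((k:ℂ)+1)*n^2*hee
    have hAnew : (4*n^2 - 1) * AA n (k+1) = ee n (k+1) * (4*n^2 - 1 - 2*((k:ℂ)+1)) := by
      apply mul_left_cancel₀ h1k
      linear_combination (4*n^2 - 1)*e2 + hBnew + ((k:ℂ)+1/2)*hA - hB + 2*hee
    constructor
    · push_cast
      linear_combination hAnew
    · push_cast
      linear_combination hBnew
lemma pochf_rel (f : ℂ) (i : ℕ) : poch (f+1) i * f = poch f i * (f + i) := by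
  induction i with
  | zero => simp [poch_zero]
  | succ i ih =>
    rw [poch_succ, poch_succ]
    push_cast
    linear_combination (f + 1 + i) * ih

lemma cc_eq (n f : ℂ) (hfm : ∀ m : ℕ, f + m ≠ 0) (i : ℕ) :
    cc n f i = aa n i + (i:ℂ)/f * aa n i := by
  have hf0 : f ≠ 0 := by simpa using hfm 0
  have hpf : poch f i ≠ 0 := poch_ne_zero hfm i
  unfold cc aa
  rw [show poch (f+1) i = poch f i * (f + i) / f from by
    rw [eq_div_iff hf0]; linear_combination pochf_rel f i]
  field_simp [hpf, poch32_ne i, fact_ne i]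

lemma coef (n f η : ℂ) (hfm : ∀ m : ℕ, f + m ≠ 0) (hd : n^2 - f/2 ≠ 0)
    (hη : η = (n^2 - 1/4) * f / (n^2 - f/2)) (hM : n^2 - 1/4 ≠ 0) (k : ℕ) :
    ∑ i ∈ range (k+1), bb i * cc n f (k - i) = ee n k * (1 + (k:ℂ)/η) := by
  have hf0 : f ≠ 0 := by simpa using hfm 0
  have h4M : (4*n^2 - 1 : ℂ) ≠ 0 := fun h => hM (by linear_combination h/4)
  have hrev : ∑ i ∈ range (k+1), bb i * cc n f (k - i)
      = ∑ i ∈ range (k+1), cc n f i * bb (k - i) := by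
    rw [← Finset.sum_range_reflect (fun i => cc n f i * bb (k - i)) (k+1)]
    refine Finset.sum_congr rfl fun i hi => ?_
    have hik : i ≤ k := by simpa [Nat.lt_succ_iff] using hi
    simp only [Nat.add_sub_cancel]
    rw [Nat.sub_sub_self hik, mul_comm]
  rw [hrev]
  have hsplit : ∑ i ∈ range (k+1), cc n f i * bb (k - i)
      = AA n k + f⁻¹ * BB n k := by
    unfold AA BB
    rw [Finset.mul_sum, ← Finset.sum_add_distrib]
    refine Finset.sum_congr rfl fun i _ => ?_
    rw [cc_eq n f hfm i]
    field_simp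
  rw [hsplit]
  obtain ⟨hA, hB⟩ := closed_forms n k
  have hη0 : η ≠ 0 := by rw [hη]; exact div_ne_zero (mul_ne_zero hM hf0) hd
  have i2 : f * f⁻¹ = 1 := mul_inv_cancel₀ hf0
  have i4 : η * η⁻¹ = 1 := mul_inv_cancel₀ hη0
  have hηrel : η * (n^2 - f/2) = (n^2 - 1/4) * f := by
    rw [hη]; exact div_mul_cancel₀ _ hd
  apply mul_left_cancel₀ (show ((4*n^2-1) * (f*η) : ℂ) ≠ 0 from
    mul_ne_zero h4M (mul_ne_zero hf0 hη0))
  rw [div_eq_mul_inv ((k:ℕ):ℂ) η]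
  linear_combination (f*η)*hA + η*hB + ((4*n^2-1)*η*(BB n k))*i2
    - ((4*n^2-1)*f*(k:ℂ)*(ee n k))*i4 + 4*(k:ℂ)*(ee n k)*hηrel
section Analytic
open Filter Topology Metric

lemma bb_succ' (j : ℕ) : bb (j+1) = (((j:ℂ) + 1/2) * bb j) / ((j:ℂ) + 1) := by
  rw [eq_div_iff (hnat1 j)]
  linear_combination bb_succ j

lemma norm_bb_le_one : ∀ j, ‖bb j‖ ≤ 1 := by
  intro j
  induction j with
  | zero => simp [bb_zero]
  | succ j ih =>
    rw [bb_succ']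
    have h1 : ((j:ℂ) + 1/2) = (((j:ℝ) + 1/2 : ℝ) : ℂ) := by push_cast; ring
    have h2 : ((j:ℂ) + 1) = (((j:ℝ) + 1 : ℝ) : ℂ) := by push_cast; ring
    rw [norm_div, norm_mul, h1, h2, Complex.norm_real, Complex.norm_real]
    rw [Real.norm_eq_abs, Real.norm_eq_abs, abs_of_nonneg (by positivity),
      abs_of_nonneg (by positivity)]
    rw [div_le_one (by positivity)]
    nlinarith [norm_nonneg (bb j)]

lemma s_bz {z : ℂ} (hz : ‖z‖ < 1) : Summable (fun j => ‖bb j * z^j‖) := by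
  refine Summable.of_nonneg_of_le (fun j => norm_nonneg _) (fun j => ?_)
    (summable_geometric_of_lt_one (norm_nonneg z) hz)
  rw [norm_mul, norm_pow]
  calc ‖bb j‖ * ‖z‖^j ≤ 1 * ‖z‖^j := by
        exact mul_le_mul_of_nonneg_right (norm_bb_le_one j) (by positivity)
    _ = ‖z‖^j := one_mul _

lemma s_u1 {r : ℝ} (h0 : 0 ≤ r) (h1 : r < 1) :
    Summable (fun j : ℕ => ((j:ℝ) + 1) * r^j) := by
  have ha := summable_pow_mul_geometric_of_norm_lt_one (R := ℝ) 1
    (r := r) (by rwa [Real.norm_eq_abs, abs_of_nonneg h0])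
  have hb := summable_geometric_of_lt_one h0 h1
  exact (ha.add hb).congr fun j => by push_cast; ring

lemma s_ujr {r : ℝ} (h0 : 0 ≤ r) (h1 : r < 1) :
    Summable (fun j : ℕ => (j:ℝ) * r^(j-1)) := by
  rw [← summable_nat_add_iff 1]
  refine (s_u1 h0 h1).congr fun j => ?_
  simp only [Nat.add_sub_cancel]
  push_cast
  ring

lemma s_der {z : ℂ} (hz : ‖z‖ < 1) :
    Summable (fun j => ‖bb j * ((j:ℂ) * z^(j-1))‖) := by
  refine Summable.of_nonneg_of_le (fun j => norm_nonneg _) (fun j => ?_)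
    (s_ujr (norm_nonneg z) hz)
  rw [norm_mul, norm_mul, norm_pow, Complex.norm_natCast]
  calc ‖bb j‖ * ((j:ℝ) * ‖z‖^(j-1)) ≤ 1 * ((j:ℝ) * ‖z‖^(j-1)) := by
        exact mul_le_mul_of_nonneg_right (norm_bb_le_one j) (by positivity)
    _ = (j:ℝ) * ‖z‖^(j-1) := one_mul _

lemma s_shift {z : ℂ} (hz : ‖z‖ < 1) :
    Summable (fun j => ‖bb (j+1) * (((j:ℂ)+1) * z^j)‖) := by
  refine Summable.of_nonneg_of_le (fun j => norm_nonneg _) (fun j => ?_)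
    (s_u1 (norm_nonneg z) hz)
  rw [norm_mul, norm_mul, norm_pow]
  have h2 : ((j:ℂ) + 1) = (((j:ℝ) + 1 : ℝ) : ℂ) := by push_cast; ring
  rw [h2, Complex.norm_real, Real.norm_eq_abs, abs_of_nonneg (by positivity)]
  calc ‖bb (j+1)‖ * (((j:ℝ)+1) * ‖z‖^j) ≤ 1 * (((j:ℝ)+1) * ‖z‖^j) := by
        exact mul_le_mul_of_nonneg_right (norm_bb_le_one (j+1)) (by positivity)
    _ = ((j:ℝ)+1) * ‖z‖^j := one_mul _

noncomputable def gb (z : ℂ) : ℂ := ∑' j, bb j * z^j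

lemma gb_hasDeriv {z : ℂ} (hz : ‖z‖ < 1) :
    HasDerivAt gb (∑' j, bb j * ((j:ℂ) * z^(j-1))) z := by
  set r : ℝ := (1 + ‖z‖)/2 with hr
  have h0r : 0 ≤ r := by positivity
  have hr1 : r < 1 := by rw [hr]; linarith
  have hzr : ‖z‖ < r := by rw [hr]; linarith
  have hball : z ∈ ball (0:ℂ) r := mem_ball_zero_iff.mpr hzr
  have h0ball : (0:ℂ) ∈ ball (0:ℂ) r :=
    mem_ball_self (lt_of_le_of_lt (norm_nonneg z) hzr)
  exact hasDerivAt_tsum_of_isPreconnected (s_ujr h0r hr1)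
    isOpen_ball (convex_ball (0:ℂ) r).isPreconnected
    (fun j y _ => (hasDerivAt_pow j y).const_mul (bb j))
    (fun j y hy => by
      rw [norm_mul, norm_mul, norm_pow, Complex.norm_natCast]
      have hyr : ‖y‖ ≤ r := le_of_lt (mem_ball_zero_iff.mp hy)
      calc ‖bb j‖ * ((j:ℝ) * ‖y‖^(j-1)) ≤ 1 * ((j:ℝ) * r^(j-1)) := by
            refine mul_le_mul (norm_bb_le_one j) ?_ (by positivity) zero_le_one
            exact mul_le_mul_of_nonneg_left (pow_le_pow_left₀ (norm_nonneg y) hyr _) (by positivity)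
        _ = (j:ℝ) * r^(j-1) := one_mul _)
    h0ball ((s_bz (show ‖(0:ℂ)‖ < 1 by simp)).of_norm) hball

lemma gb_feq {z : ℂ} (hz : ‖z‖ < 1) :
    (1 - z) * (∑' j, bb j * ((j:ℂ) * z^(j-1))) = (1/2) * gb z := by
  have hs1 : Summable (fun j => bb j * ((j:ℂ) * z^(j-1))) := (s_der hz).of_norm
  have hs2 : Summable (fun j => bb (j+1) * (((j:ℂ)+1) * z^j)) := (s_shift hz).of_norm
  have hs3 : Summable (fun j => bb j * ((j:ℂ) * z^j)) := by
    refine Summable.of_norm ?_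
    refine Summable.of_nonneg_of_le (fun j => norm_nonneg _) (fun j => ?_)
      (s_u1 (norm_nonneg z) hz)
    rw [norm_mul, norm_mul, norm_pow, Complex.norm_natCast]
    calc ‖bb j‖ * ((j:ℝ) * ‖z‖^j) ≤ 1 * (((j:ℝ)+1) * ‖z‖^j) := by
          refine mul_le_mul (norm_bb_le_one j) ?_ (by positivity) zero_le_one
          refine mul_le_mul_of_nonneg_right (by linarith) (by positivity)
      _ = ((j:ℝ)+1) * ‖z‖^j := one_mul _
  have hG : (∑' j, bb j * ((j:ℂ) * z^(j-1))) = ∑' j, bb (j+1) * (((j:ℂ)+1) * z^j) := by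
    rw [Summable.tsum_eq_zero_add hs1]
    simp only [Nat.cast_zero, zero_mul, mul_zero, zero_add]
    refine tsum_congr fun j => ?_
    simp only [Nat.add_sub_cancel]
    push_cast
    ring
  have hzG : z * (∑' j, bb j * ((j:ℂ) * z^(j-1))) = ∑' j, bb j * ((j:ℂ) * z^j) := by
    rw [← tsum_mul_left]
    refine tsum_congr fun j => ?_
    cases j with
    | zero => simp
    | succ j =>
      simp only [Nat.add_sub_cancel]
      push_cast
      ring
  have hsplit : (1 - z) * (∑' j, bb j * ((j:ℂ) * z^(j-1)))
      = (∑' j, bb j * ((j:ℂ) * z^(j-1))) - z * (∑' j, bb j * ((j:ℂ) * z^(j-1))) := by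
    ring
  rw [hsplit, hzG, hG, ← Summable.tsum_sub hs2 hs3]
  rw [gb, ← tsum_mul_left]
  refine tsum_congr fun j => ?_
  have hb := bb_succ j
  push_cast
  linear_combination z^j * hb

lemma gb_zero : gb 0 = 1 := by
  rw [gb]
  rw [tsum_eq_single 0 (fun j hj => by simp [zero_pow hj])]
  simp [bb_zero]

lemma gb_eq_cpow {z : ℂ} (hz : ‖z‖ < 1) : (1 - z) ^ (-(1/2) : ℂ) = gb z := by
  have hF' : ∀ w ∈ ball (0:ℂ) 1,
      HasDerivAt (fun w => (1 - w) ^ ((1:ℂ)/2) * gb w) 0 w := by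
    intro w hw
    have hw1 : ‖w‖ < 1 := mem_ball_zero_iff.mp hw
    have hre : 0 < (1 - w).re := by
      have h1 : |w.re| ≤ ‖w‖ := Complex.abs_re_le_norm w
      have h2 : (1 - w).re = 1 - w.re := by simp [Complex.sub_re]
      rw [h2]
      cases abs_le.mp h1 with
      | intro hl hr => linarith
    have hne : (1:ℂ) - w ≠ 0 := by
      intro h
      have h1 : (1:ℂ) = w := by linear_combination h
      rw [← h1] at hw1
      simp at hw1
    have hd1 : HasDerivAt (fun w : ℂ => 1 - w) (-1) w := (hasDerivAt_id w).const_sub 1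
    have hcp := hd1.cpow_const (c := (1:ℂ)/2)
      (Complex.mem_slitPlane_iff.mpr (Or.inl hre))
    have hgd := gb_hasDeriv hw1
    have hmul := hcp.mul hgd
    refine hmul.congr_deriv ?_
    have hfe := gb_feq hw1
    rw [Complex.cpow_sub _ _ hne, Complex.cpow_one]
    have expand : ((1:ℂ)/2 * ((1 - w)^((1:ℂ)/2) / (1 - w)) * (-1)) * gb w
        + (1 - w)^((1:ℂ)/2) * (∑' j, bb j * ((j:ℂ) * w^(j-1)))
        = ((1 - w)^((1:ℂ)/2) / (1 - w))
            * ((1 - w) * (∑' j, bb j * ((j:ℂ) * w^(j-1))) - 1/2 * gb w) := by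
      field_simp
      ring
    rw [expand, hfe]
    simp
  have hkey : ∀ w ∈ ball (0:ℂ) 1, (1 - w) ^ ((1:ℂ)/2) * gb w = 1 := by
    intro w hw
    have hdiff : DifferentiableOn ℂ (fun w => (1 - w) ^ ((1:ℂ)/2) * gb w) (ball (0:ℂ) 1) :=
      fun x hx => ((hF' x hx).differentiableAt).differentiableWithinAt
    have hzero : ∀ x ∈ ball (0:ℂ) 1,
        fderivWithin ℂ (fun w => (1 - w) ^ ((1:ℂ)/2) * gb w) (ball (0:ℂ) 1) x = 0 := by
      intro x hx
      have h := hasDerivAt_iff_hasFDerivAt.mp (hF' x hx)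
      have h2 := h.hasFDerivWithinAt.fderivWithin (isOpen_ball.uniqueDiffWithinAt hx)
      rw [h2]
      ext v
      simp
    have hcon := (convex_ball (0:ℂ) 1).is_const_of_fderivWithin_eq_zero hdiff hzero hw
      (mem_ball_self one_pos)
    rw [hcon]
    simp [gb_zero, Complex.one_cpow]
  have h := hkey z (mem_ball_zero_iff.mpr hz)
  have h2 : gb z = ((1 - z) ^ ((1:ℂ)/2))⁻¹ :=
    eq_inv_of_mul_eq_one_left (by rw [mul_comm] at h; exact h)
  rw [h2, ← Complex.cpow_neg]
  try norm_num

end Analytic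
section MainPart
open Filter Topology Metric

lemma tendsto_ratio (a b : ℂ) :
    Tendsto (fun i : ℕ => (a + i)/(b + i)) atTop (𝓝 1) := by
  have hgrow : Tendsto (fun i : ℕ => (i:ℝ) + -‖b‖) atTop atTop :=
    tendsto_atTop_add_const_right atTop _ tendsto_natCast_atTop_atTop
  have hbn : Tendsto (fun i : ℕ => ‖b + (i:ℂ)‖) atTop atTop := by
    refine tendsto_atTop_mono' atTop (Filter.Eventually.of_forall fun i => ?_) hgrow
    have h0 : ‖(b + (i:ℂ)) - b‖ ≤ ‖b + (i:ℂ)‖ + ‖b‖ := norm_sub_le _ _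
    have h1 : (b + (i:ℂ)) - b = (i:ℂ) := by ring
    rw [h1, Complex.norm_natCast] at h0
    show (i:ℝ) + -‖b‖ ≤ ‖b + (i:ℂ)‖
    linarith
  have hinv : Tendsto (fun i : ℕ => (b + (i:ℂ))⁻¹) atTop (𝓝 0) := by
    rw [tendsto_zero_iff_norm_tendsto_zero]
    exact (tendsto_inv_atTop_zero.comp hbn).congr fun i => (norm_inv _).symm
  have heq : ∀ᶠ i : ℕ in atTop, 1 + (a - b) * (b + (i:ℂ))⁻¹ = (a + i)/(b + i) := by
    filter_upwards [hbn.eventually_gt_atTop 0] with i hi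
    have hne : b + (i:ℂ) ≠ 0 := by
      intro h
      rw [h] at hi
      simp at hi
    field_simp
    ring
  have hlim : Tendsto (fun i : ℕ => 1 + (a - b) * (b + (i:ℂ))⁻¹) atTop (𝓝 1) := by
    have h := tendsto_const_nhds (x := (1:ℂ)) (f := atTop (α := ℕ))
    have h2 := h.add (hinv.const_mul (a - b))
    simpa using h2
  exact hlim.congr' heq

lemma s_cc (n f : ℂ) (hfm : ∀ m : ℕ, f + (m:ℂ) ≠ 0) {z : ℂ} (hz : ‖z‖ < 1) :
    Summable (fun i => ‖cc n f i * z^i‖) := by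
  have hrec : ∀ i : ℕ, cc n f (i+1) * z^(i+1)
      = (cc n f i * z^i) *
        (((-n + i)/((3:ℂ)/2 + i)) * ((n + i)/((1:ℂ) + i)) * ((f + 1 + i)/(f + i)) * z) := by
    intro i
    have h1 := h32 i
    have h2 := hnat1 i
    have h2' : ((1:ℂ) + i) ≠ 0 := by intro h; exact h2 (by linear_combination h)
    have h3 := hfm i
    have hrec' : (((3:ℂ)/2 + i) * (((1:ℂ) + i) * (f + i))) * cc n f (i+1)
        = ((-n + i) * ((n + i) * (f + 1 + i))) * cc n f i := by
      unfold cc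
      refine div_transfer ?_ ?_ ?_
      · exact mul_ne_zero (mul_ne_zero (poch32_ne _) (poch_ne_zero hfm _)) (fact_ne _)
      · exact mul_ne_zero (mul_ne_zero (poch32_ne _) (poch_ne_zero hfm _)) (fact_ne _)
      · simp only [poch_succ, Nat.factorial_succ]
        push_cast
        ring
    have hD : (((3:ℂ)/2 + i) * (((1:ℂ) + i) * (f + i))) ≠ 0 :=
      mul_ne_zero h1 (mul_ne_zero h2' h3)
    have hQ : (((3:ℂ)/2 + i) * (((1:ℂ) + i) * (f + i)))
        * (((-n + i)/((3:ℂ)/2 + i)) * ((n + i)/((1:ℂ) + i)) * ((f + 1 + i)/(f + i)) * z)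
        = ((-n + i) * ((n + i) * (f + 1 + i))) * z := by
      have i1 : ((3:ℂ)/2 + i) * ((3:ℂ)/2 + i)⁻¹ = 1 := mul_inv_cancel₀ h1
      have i2 : ((1:ℂ) + i) * ((1:ℂ) + i)⁻¹ = 1 := mul_inv_cancel₀ h2'
      have i3 : (f + (i:ℂ)) * (f + (i:ℂ))⁻¹ = 1 := mul_inv_cancel₀ h3
      rw [div_eq_mul_inv, div_eq_mul_inv, div_eq_mul_inv]
      linear_combination ((-n + (i:ℂ)) * ((n + i) * (f + 1 + i)) * z *
          (((1:ℂ)+i)*((1:ℂ)+i)⁻¹) * ((f+(i:ℂ))*(f+(i:ℂ))⁻¹)) * i1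
        + ((-n + (i:ℂ)) * ((n + i) * (f + 1 + i)) * z * ((f+(i:ℂ))*(f+(i:ℂ))⁻¹)) * i2
        + ((-n + (i:ℂ)) * ((n + i) * (f + 1 + i)) * z) * i3
    apply mul_left_cancel₀ hD
    calc (((3:ℂ)/2 + i) * (((1:ℂ) + i) * (f + i))) * (cc n f (i+1) * z^(i+1))
        = ((((3:ℂ)/2 + i) * (((1:ℂ) + i) * (f + i))) * cc n f (i+1)) * z^(i+1) := by ring
      _ = (((-n + i) * ((n + i) * (f + 1 + i))) * cc n f i) * z^(i+1) := by rw [hrec']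
      _ = (((3:ℂ)/2 + i) * (((1:ℂ) + i) * (f + i))) * ((cc n f i * z^i) *
            (((-n + i)/((3:ℂ)/2 + i)) * ((n + i)/((1:ℂ) + i)) * ((f + 1 + i)/(f + i)) * z)) := by
          linear_combination (-(cc n f i * z^i)) * hQ
  have ht : Tendsto (fun i : ℕ =>
      ‖((-n + i)/((3:ℂ)/2 + i)) * ((n + i)/((1:ℂ) + i)) * ((f + 1 + i)/(f + i)) * z‖)
      atTop (𝓝 ‖z‖) := by
    have tt := ((tendsto_ratio (-n) ((3:ℂ)/2)).mul (tendsto_ratio n 1)).mul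
      (tendsto_ratio (f+1) f)
    have tt2 := (tt.mul_const z).norm
    simpa only [one_mul] using tt2
  have hr1 : (1 + ‖z‖)/2 < 1 := by linarith
  have hzr : ‖z‖ < (1 + ‖z‖)/2 := by linarith
  refine summable_of_ratio_norm_eventually_le hr1 ?_
  filter_upwards [ht.eventually_le_const hzr] with i hi
  rw [norm_norm, norm_norm, hrec i, norm_mul]
  calc ‖cc n f i * z^i‖ * ‖_root_.id (((-n + i)/((3:ℂ)/2 + i)) * ((n + i)/((1:ℂ) + i)) * ((f + 1 + i)/(f + i)) * z)‖
      ≤ ‖cc n f i * z^i‖ * ((1 + ‖z‖)/2) := by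
        exact mul_le_mul_of_nonneg_left (by simpa using hi) (norm_nonneg _)
    _ = (1 + ‖z‖)/2 * ‖cc n f i * z^i‖ := by ring

end MainPart

/-- **Extension of Ramanujan's first transformation with one extra parameter pair.** -/
theorem extended_ramanujan_first (n f η : ℂ)
    (hf : ∀ k : ℕ, f ≠ -(k : ℂ)) (hden : n ^ 2 ≠ f / 2)
    (hη : η = (n ^ 2 - 1 / 4) * f / (n ^ 2 - f / 2)) (hη0 : η ≠ 0) :
    ∀ x : ℂ, ‖x‖ < 1 →
      (1 - x ^ 2) ^ (-(1 / 2) : ℂ) *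
        ∑' k : ℕ, poch (-n) k * poch n k * poch (f + 1) k * x ^ (2 * k) /
          (poch (3 / 2) k * poch f k * (Nat.factorial k : ℂ))
      = ∑' k : ℕ, poch (1 / 2 - n) k * poch (1 / 2 + n) k * x ^ (2 * k) *
          (1 + (k : ℂ) / η) / (poch (3 / 2) k * (Nat.factorial k : ℂ)) := by
  intro x hx
  have hz : ‖x^2‖ < 1 := by
    rw [norm_pow]
    nlinarith [norm_nonneg x]
  have hfm : ∀ m : ℕ, f + (m:ℂ) ≠ 0 := fun m h => hf m (by linear_combination h)
  have hM : n^2 - 1/4 ≠ 0 := by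
    intro h
    apply hη0
    rw [hη, h, zero_mul, zero_div]
  have hd : n^2 - f/2 ≠ 0 := sub_ne_zero.mpr hden
  have hcterm : ∀ k : ℕ, poch (-n) k * poch n k * poch (f + 1) k * x ^ (2 * k) /
      (poch (3 / 2) k * poch f k * (Nat.factorial k : ℂ)) = cc n f k * (x^2)^k := by
    intro k
    rw [← pow_mul]
    unfold cc
    ring
  rw [tsum_congr hcterm, gb_eq_cpow hz]
  show gb (x^2) * _ = _
  rw [gb, tsum_mul_tsum_eq_tsum_sum_range_of_summable_norm (s_bz hz) (s_cc n f hfm hz)]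
  refine tsum_congr fun k => ?_
  have hin : ∑ i ∈ Finset.range (k+1), (bb i * (x^2)^i) * (cc n f (k-i) * (x^2)^(k-i))
      = (∑ i ∈ Finset.range (k+1), bb i * cc n f (k-i)) * (x^2)^k := by
    rw [Finset.sum_mul]
    refine Finset.sum_congr rfl fun i hi => ?_
    have hik : i ≤ k := by simpa [Nat.lt_succ_iff] using hi
    rw [show (x^2)^k = (x^2)^i * (x^2)^(k-i) from by
      rw [← pow_add, Nat.add_sub_cancel' hik]]
    ring
  rw [hin, coef n f η hfm hd hη hM k]
  unfold ee
  rw [show x^(2*k) = (x^2)^k from pow_mul x 2 k]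
  ring
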